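/- Let f be a homogeneous cubic polynomial in n variables with real coefficients and let r ≥ 3 be an integer. Then f̲ − f_min^{(r−3)} ≤ (4r/((r−1)(r−2))) (f̄ − f̲). -/

import Mathlib

open Finset

noncomputable section

/-- Falling factorial `t^(d) = t (t-1) ⋯ (t-d+1)`. -/
def fall (t : ℝ) : ℕ → ℝ
  | 0 => 1
  | d + 1 => fall t d * (t - (d : ℝ))

/-- The regular grid `Δ(n,r) = {x ∈ Δ_n : r·x ∈ ℕ^n}`. -/
def regularGrid (n r : ℕ) : Set (Fin n → ℝ) :=
  {x ∈ stdSimplex ℝ (Fin n) | ∀ i, ∃ k : ℕ, (r : ℝ) * x i = (k : ℝ)}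

/-- `f_{Δ(n,r)}`, the minimum of `f` over the regular grid. -/
def minGrid (n r : ℕ) (f : (Fin n → ℝ) → ℝ) : ℝ :=
  sInf (f '' regularGrid n r)

/-- `f̲`, the minimum of `f` over the standard simplex. -/
def minSimplex (n : ℕ) (f : (Fin n → ℝ) → ℝ) : ℝ :=
  sInf (f '' stdSimplex ℝ (Fin n))

/-- `f̄`, the maximum of `f` over the standard simplex. -/
def maxSimplex (n : ℕ) (f : (Fin n → ℝ) → ℝ) : ℝ :=
  sSup (f '' stdSimplex ℝ (Fin n))

/-- The homogeneous polynomial of degree `d` with coefficients `c`,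
`f(x) = Σ_{β ∈ I(n,d)} c_β x^β`. -/
def homPoly (n d : ℕ) (c : (Fin n → ℕ) → ℝ) (x : Fin n → ℝ) : ℝ :=
  ∑ β ∈ Finset.Nat.antidiagonalTuple n d, c β * ∏ i, x i ^ β i

/-- The Pólya-type lower bound
`f_min^{(r-d)} = min_{α ∈ I(n,r)} Σ_{β ∈ I(n,d)} c_β α^{(β)} / r^{(d)}`. -/
def polyaBound (n d r : ℕ) (c : (Fin n → ℕ) → ℝ) : ℝ :=
  sInf ((fun α : Fin n → ℕ =>
      (∑ β ∈ Finset.Nat.antidiagonalTuple n d,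
        c β * ∏ i, fall ((α i : ℕ) : ℝ) (β i)) / fall (r : ℝ) d) ''
    {α : Fin n → ℕ | ∑ i, α i = r})

namespace St7

variable {n : ℕ}

/-- `b3 i` is the exponent tuple `3·e_i`. -/
def b3 (i : Fin n) : Fin n → ℕ := fun k => if k = i then 3 else 0

/-- `b2 i j` is the exponent tuple `2·e_i + e_j` (for `i ≠ j`). -/
def b2 (i j : Fin n) : Fin n → ℕ := fun k => if k = i then 2 else if k = j then 1 else 0

lemma fall_one (t : ℝ) : fall t 1 = t := by simp [fall]
lemma fall_two (t : ℝ) : fall t 2 = t * (t - 1) := by simp [fall]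
lemma fall_three (t : ℝ) : fall t 3 = t * (t - 1) * (t - 2) := by
  show fall t 2 * (t - 2) = _
  rw [fall_two]

lemma b3_mem (i : Fin n) : b3 i ∈ Finset.Nat.antidiagonalTuple n 3 := by
  simp [Finset.Nat.mem_antidiagonalTuple, b3]

lemma b2_mem {i j : Fin n} (h : i ≠ j) : b2 i j ∈ Finset.Nat.antidiagonalTuple n 3 := by
  rw [Finset.Nat.mem_antidiagonalTuple]
  have : ∀ k, b2 i j k = (if k = i then 2 else 0) + (if k = j then 1 else 0) := by
    intro k
    by_cases hk : k = i <;> by_cases hk' : k = j <;>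
      simp_all [b2]
  simp [this, Finset.sum_add_distrib]

lemma sum_le_of_mem {β : Fin n → ℕ} (hβ : β ∈ Finset.Nat.antidiagonalTuple n 3)
    {i j : Fin n} (hij : i ≠ j) : β i + β j ≤ 3 := by
  rw [Finset.Nat.mem_antidiagonalTuple] at hβ
  calc β i + β j = ∑ k ∈ {i, j}, β k := by rw [Finset.sum_pair hij]
    _ ≤ ∑ k, β k := Finset.sum_le_sum_of_subset (Finset.subset_univ _)
    _ = 3 := hβ

/-- If `β ∈ I(n,3)` has `β i ≥ 2` then all other entries are at most 1. -/
lemma small_of_ge_two {β : Fin n → ℕ} (hβ : β ∈ Finset.Nat.antidiagonalTuple n 3)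
    {i : Fin n} (hi : 2 ≤ β i) {j : Fin n} (hj : j ≠ i) : β j ≤ 1 := by
  have := sum_le_of_mem hβ hj
  omega

end St7

namespace St7
variable {n : ℕ}

lemma fall_eq_pow {t : ℝ} {b : ℕ} (hb : b ≤ 1) : fall t b = t ^ b := by
  interval_cases b <;> simp [fall]

lemma le_three {β : Fin n → ℕ} (hβ : β ∈ Finset.Nat.antidiagonalTuple n 3) (i : Fin n) :
    β i ≤ 3 := by
  rw [Finset.Nat.mem_antidiagonalTuple] at hβ
  calc β i ≤ ∑ k, β k := Finset.single_le_sum (fun _ _ => Nat.zero_le _) (Finset.mem_univ i)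
    _ = 3 := hβ

lemma eq_b3 {β : Fin n → ℕ} (hβ : β ∈ Finset.Nat.antidiagonalTuple n 3)
    {i : Fin n} (h : β i = 3) : β = b3 i := by
  funext k
  by_cases hk : k = i
  · simp [b3, hk, h]
  · have := sum_le_of_mem hβ (Ne.symm hk)
    simp [b3, hk]
    omega

lemma eq_b2 {β : Fin n → ℕ} (hβ : β ∈ Finset.Nat.antidiagonalTuple n 3)
    {i : Fin n} (h : β i = 2) : ∃ j ∈ Finset.univ.erase i, β = b2 i j := by
  have hsum := (Finset.Nat.mem_antidiagonalTuple).1 hβ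
  have h1 : β i + ∑ k ∈ Finset.univ.erase i, β k = 3 := by
    rw [Finset.add_sum_erase _ _ (Finset.mem_univ i), hsum]
  have h2 : ∑ k ∈ Finset.univ.erase i, β k = 1 := by omega
  have hex : ∃ j ∈ Finset.univ.erase i, β j ≠ 0 := by
    by_contra hc
    push_neg at hc
    rw [Finset.sum_eq_zero hc] at h2
    omega
  obtain ⟨j, hj, hj0⟩ := hex
  have hjle : β j ≤ 1 := h2 ▸ Finset.single_le_sum (fun _ _ => Nat.zero_le _) hj
  have hj1 : β j = 1 := by omega
  have h3 : β j + ∑ k ∈ (Finset.univ.erase i).erase j, β k = 1 := by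
    rw [Finset.add_sum_erase _ _ hj, h2]
  have h4 : ∀ k ∈ (Finset.univ.erase i).erase j, β k = 0 := by
    have : ∑ k ∈ (Finset.univ.erase i).erase j, β k = 0 := by omega
    intro k hk
    exact (Finset.sum_eq_zero_iff.1 this) k hk
  refine ⟨j, hj, funext fun k => ?_⟩
  have hji : j ≠ i := (Finset.mem_erase.1 hj).1
  by_cases hk : k = i
  · simp [b2, hk, h]
  · by_cases hk' : k = j
    · subst hk'; simp [b2, hk, hj1]
    · have : β k = 0 := h4 k (by simp [hk, hk'])
      simp [b2, hk, hk', this]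

/-- Telescoping identity for the difference of power product and falling-factorial product. -/
lemma corr_eq (α : Fin n → ℝ) {β : Fin n → ℕ}
    (hβ : β ∈ Finset.Nat.antidiagonalTuple n 3) :
    (∏ i, α i ^ β i) - ∏ i, fall (α i) (β i)
      = ∑ i, (α i ^ β i - fall (α i) (β i)) * ∏ j ∈ Finset.univ.erase i, α j ^ β j := by
  by_cases hc : ∃ i, 2 ≤ β i
  · obtain ⟨i, hi⟩ := hc
    have hsmall : ∀ j, j ≠ i → fall (α j) (β j) = α j ^ β j := fun j hj =>
      fall_eq_pow (small_of_ge_two hβ hi hj)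
    have hP : ∏ j ∈ Finset.univ.erase i, fall (α j) (β j)
        = ∏ j ∈ Finset.univ.erase i, α j ^ β j :=
      Finset.prod_congr rfl fun j hj => hsmall j (Finset.mem_erase.1 hj).1
    rw [← Finset.mul_prod_erase Finset.univ _ (Finset.mem_univ i),
        ← Finset.mul_prod_erase Finset.univ (fun j => fall (α j) (β j)) (Finset.mem_univ i),
        hP, Finset.sum_eq_single i]
    · ring
    · intro j _ hji
      have : fall (α j) (β j) = α j ^ β j := hsmall j hji
      rw [this]; ring
    · intro h; exact absurd (Finset.mem_univ i) h
  · push_neg at hc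
    have hc' : ∀ i, β i ≤ 1 := fun i => by have := hc i; omega
    have : ∀ i, fall (α i) (β i) = α i ^ β i := fun i => fall_eq_pow (hc' i)
    rw [Finset.prod_congr rfl fun i _ => this i]
    rw [Finset.sum_eq_zero fun i _ => by rw [this i]; ring]
    ring

end St7

namespace St7
variable {n : ℕ}

lemma b3_ne_b2 (i : Fin n) {j : Fin n} (hj : j ≠ i) : b3 i ≠ b2 i j := by
  intro h
  have := congrFun h i
  simp [b3, b2] at this

lemma b2_injOn (i : Fin n) {j j' : Fin n} (hj : j ≠ i) (hj' : j' ≠ i)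
    (h : b2 i j = b2 i j') : j = j' := by
  have := congrFun h j
  simp [b2, hj] at this
  by_cases hjj : j = j'
  · exact hjj
  · simp [hjj] at this

/-- Reindexing: the `i`-th correction sum over all of `I(n,3)` picks out the
tuples `2e_i + e_j` and `3e_i`. -/
lemma reindex (α : Fin n → ℝ) (c : (Fin n → ℕ) → ℝ) (i : Fin n) :
    ∑ β ∈ Finset.Nat.antidiagonalTuple n 3,
        c β * ((α i ^ β i - fall (α i) (β i)) * ∏ j ∈ Finset.univ.erase i, α j ^ β j)
      = (∑ j ∈ Finset.univ.erase i, c (b2 i j) * (α i * α j))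
        + c (b3 i) * (3 * α i ^ 2 - 2 * α i) := by
  classical
  set F : Finset (Fin n → ℕ) :=
    insert (b3 i) ((Finset.univ.erase i).image (b2 i)) with hF
  have hFsub : F ⊆ Finset.Nat.antidiagonalTuple n 3 := by
    intro β hβ
    rw [hF, Finset.mem_insert] at hβ
    rcases hβ with h | h
    · exact h ▸ b3_mem i
    · obtain ⟨j, hj, rfl⟩ := Finset.mem_image.1 h
      exact b2_mem (Ne.symm (Finset.mem_erase.1 hj).1)
  have hvanish : ∀ β ∈ Finset.Nat.antidiagonalTuple n 3, β ∉ F →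
      c β * ((α i ^ β i - fall (α i) (β i)) * ∏ j ∈ Finset.univ.erase i, α j ^ β j) = 0 := by
    intro β hβ hβF
    have h3 : β i ≤ 3 := le_three hβ i
    rcases Nat.lt_or_ge (β i) 2 with h | h
    · rw [fall_eq_pow (by omega : β i ≤ 1)]
      ring
    · exfalso
      rcases Nat.eq_or_lt_of_le h with h2 | h2
      · obtain ⟨j, hj, rfl⟩ := eq_b2 hβ h2.symm
        exact hβF (by rw [hF]; exact Finset.mem_insert_of_mem (Finset.mem_image_of_mem _ hj))
      · have : β i = 3 := by omega
        exact hβF (by rw [hF, eq_b3 hβ this]; exact Finset.mem_insert_self _ _)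
  rw [← Finset.sum_subset hFsub hvanish, hF,
      Finset.sum_insert (by
        intro h
        obtain ⟨j, hj, hjeq⟩ := Finset.mem_image.1 h
        exact b3_ne_b2 i (Finset.mem_erase.1 hj).1 hjeq.symm),
      Finset.sum_image (fun j hj j' hj' h =>
        b2_injOn i (Finset.mem_erase.1 hj).1 (Finset.mem_erase.1 hj').1 h)]
  rw [add_comm]
  congr 1
  · refine Finset.sum_congr rfl fun j hj => ?_
    have hji : j ≠ i := (Finset.mem_erase.1 hj).1
    have h1 : (b2 i j) i = 2 := by simp [b2]
    have h2 : ∏ k ∈ Finset.univ.erase i, α k ^ (b2 i j) k = α j := by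
      rw [Finset.prod_eq_single j]
      · simp [b2, hji]
      · intro k hk hkj
        have hki : k ≠ i := (Finset.mem_erase.1 hk).1
        simp [b2, hki, hkj]
      · intro h; exact absurd hj h
    rw [h1, h2, fall_two]
    ring
  · have h1 : (b3 i) i = 3 := by simp [b3]
    rw [h1, fall_three]
    have h2 : ∏ j ∈ Finset.univ.erase i, α j ^ (b3 i) j = 1 :=
      Finset.prod_eq_one fun j hj => by
        simp [b3, (Finset.mem_erase.1 hj).1]
    rw [h2]; ring

/-- Main identity: the Pólya numerator equals `(power sum) - (correction)`. -/
lemma main_identity (α : Fin n → ℝ) (c : (Fin n → ℕ) → ℝ) :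
    ∑ β ∈ Finset.Nat.antidiagonalTuple n 3, c β * ∏ i, fall (α i) (β i)
      = (∑ β ∈ Finset.Nat.antidiagonalTuple n 3, c β * ∏ i, α i ^ β i)
        - ∑ i, ((∑ j ∈ Finset.univ.erase i, c (b2 i j) * (α i * α j))
            + c (b3 i) * (3 * α i ^ 2 - 2 * α i)) := by
  have key : ∀ β ∈ Finset.Nat.antidiagonalTuple n 3,
      c β * ∏ i, fall (α i) (β i)
        = c β * ∏ i, α i ^ β i
          - ∑ i, c β * ((α i ^ β i - fall (α i) (β i)) * ∏ j ∈ Finset.univ.erase i, α j ^ β j) := by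
    intro β hβ
    rw [← Finset.mul_sum, ← corr_eq α hβ]
    ring
  rw [Finset.sum_congr rfl key, Finset.sum_sub_distrib, Finset.sum_comm]
  congr 1
  exact Finset.sum_congr rfl fun i _ => reindex α c i

end St7

namespace St7
variable {n : ℕ}

/-- The `i`-th vertex of the simplex. -/
def vert (i : Fin n) : Fin n → ℝ := fun k => if k = i then 1 else 0

/-- The midpoint of the edge between vertices `i` and `j`. -/
def mid (i j : Fin n) : Fin n → ℝ := fun k => if k = i then 1/2 else if k = j then 1/2 else 0

lemma vert_mem (i : Fin n) : vert i ∈ stdSimplex ℝ (Fin n) := by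
  constructor
  · intro k; by_cases h : k = i <;> simp [vert, h]
  · simp [vert]

lemma mid_mem {i j : Fin n} (hij : i ≠ j) : mid i j ∈ stdSimplex ℝ (Fin n) := by
  constructor
  · intro k
    by_cases h : k = i
    · simp [mid, h]
    · by_cases h' : k = j <;> simp [mid, h, h']
  · have : ∀ k, mid i j k = (if k = i then (1/2:ℝ) else 0) + (if k = j then (1/2:ℝ) else 0) := by
      intro k
      by_cases h : k = i <;> by_cases h' : k = j <;> simp_all [mid]
    rw [Finset.sum_congr rfl fun k _ => this k, Finset.sum_add_distrib]
    simp
    norm_num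

lemma prod_support_pair {z : Fin n → ℝ} {β : Fin n → ℕ} {i j : Fin n} (hij : i ≠ j)
    (h : ∀ k, k ≠ i → k ≠ j → β k = 0) :
    ∏ k, z k ^ β k = z i ^ β i * z j ^ β j := by
  have hp : ∏ k ∈ ({i, j} : Finset (Fin n)), z k ^ β k = z i ^ β i * z j ^ β j :=
    Finset.prod_pair hij
  rw [← hp]
  refine (Finset.prod_subset (Finset.subset_univ _) fun k _ hk => ?_).symm
  have hki : k ≠ i := fun h' => hk (by rw [h']; simp)
  have hkj : k ≠ j := fun h' => hk (by rw [h']; simp)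
  rw [h k hki hkj, pow_zero]

lemma homPoly_vert (c : (Fin n → ℕ) → ℝ) (i : Fin n) :
    homPoly n 3 c (vert i) = c (b3 i) := by
  unfold homPoly
  rw [Finset.sum_eq_single (b3 i)]
  · have : ∏ k, vert i k ^ (b3 i) k = 1 :=
      Finset.prod_eq_one fun k _ => by
        by_cases h : k = i <;> simp [vert, b3, h]
    rw [this, mul_one]
  · intro β hβ hne
    have hex : ∃ k, k ≠ i ∧ β k ≠ 0 := by
      by_contra hc
      push_neg at hc
      have h3 : β i = 3 := by
        have hsum := (Finset.Nat.mem_antidiagonalTuple).1 hβ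
        rw [← hsum, Finset.sum_eq_single i]
        · intro k _ hk; exact hc k hk
        · intro h; exact absurd (Finset.mem_univ i) h
      exact hne (eq_b3 hβ h3)
    obtain ⟨k, hki, hk0⟩ := hex
    have : vert i k ^ β k = 0 := by
      simp [vert, hki, hk0, zero_pow]
    rw [Finset.prod_eq_zero (Finset.mem_univ k) this, mul_zero]
  · intro h; exact absurd (b3_mem i) h

lemma homPoly_mid (c : (Fin n → ℕ) → ℝ) {i j : Fin n} (hij : i ≠ j) :
    homPoly n 3 c (mid i j)
      = (c (b3 i) + c (b3 j) + c (b2 i j) + c (b2 j i)) / 8 := by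
  unfold homPoly
  have hji : j ≠ i := hij.symm
  set s : Finset (Fin n → ℕ) := {b3 i, b3 j, b2 i j, b2 j i} with hs
  have hssub : s ⊆ Finset.Nat.antidiagonalTuple n 3 := by
    intro β hβ
    simp only [hs, Finset.mem_insert, Finset.mem_singleton] at hβ
    rcases hβ with rfl | rfl | rfl | rfl
    exacts [b3_mem i, b3_mem j, b2_mem hij, b2_mem hji]
  have hvan : ∀ β ∈ Finset.Nat.antidiagonalTuple n 3, β ∉ s →
      c β * ∏ k, mid i j k ^ β k = 0 := by
    intro β hβ hβs
    have hex : ∃ k, k ≠ i ∧ k ≠ j ∧ β k ≠ 0 := by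
      by_contra hc
      push_neg at hc
      have hz : ∀ k, k ≠ i → k ≠ j → β k = 0 := fun k h1 h2 => hc k h1 h2
      have hpair : β i + β j = 3 := by
        have hsum := (Finset.Nat.mem_antidiagonalTuple).1 hβ
        have hss : ∑ k ∈ ({i, j} : Finset (Fin n)), β k = ∑ k, β k :=
          Finset.sum_subset (Finset.subset_univ _) fun k _ hk => by
            have hki : k ≠ i := fun h' => hk (by rw [h']; simp)
            have hkj : k ≠ j := fun h' => hk (by rw [h']; simp)
            exact hz k hki hkj
        rw [← Finset.sum_pair hij, hss, hsum]
      apply hβs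
      have h3i : β i ≤ 3 := le_three hβ i
      interval_cases h : β i
      · have : β j = 3 := by omega
        rw [eq_b3 hβ this]
        simp [hs]
      · have h2 : β j = 2 := by omega
        obtain ⟨i', hi', heq⟩ := eq_b2 hβ h2
        have hii : i = i' := by
          by_contra hne2
          have h5 := congrFun heq i
          simp only [b2] at h5
          rw [if_neg hij, if_neg hne2] at h5
          omega
        rw [heq, ← hii]
        simp [hs]
      · have h1j : β j = 1 := by omega
        obtain ⟨j', hj', heq⟩ := eq_b2 hβ h
        have hjj : j = j' := by
          by_contra hne2
          have h5 := congrFun heq j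
          simp only [b2] at h5
          rw [if_neg hji, if_neg hne2] at h5
          omega
        rw [heq, ← hjj]
        simp [hs]
      · rw [eq_b3 hβ h]
        simp [hs]
    obtain ⟨k, hki, hkj, hk0⟩ := hex
    have : mid i j k ^ β k = 0 := by
      simp [mid, hki, hkj, hk0, zero_pow]
    rw [Finset.prod_eq_zero (Finset.mem_univ k) this, mul_zero]
  rw [← Finset.sum_subset hssub hvan]
  have e1 : ∏ k, mid i j k ^ (b3 i) k = 1/8 := by
    rw [prod_support_pair hij (fun k h1 h2 => by simp [b3, h1])]
    simp [mid, b3, hij, hji]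
    norm_num
  have e2 : ∏ k, mid i j k ^ (b3 j) k = 1/8 := by
    rw [prod_support_pair hij (fun k h1 h2 => by simp [b3, h2])]
    simp [mid, b3, hij, hji]
    norm_num
  have e3 : ∏ k, mid i j k ^ (b2 i j) k = 1/8 := by
    rw [prod_support_pair hij (fun k h1 h2 => by simp [b2, h1, h2])]
    simp [mid, b2, hij, hji]
    norm_num
  have e4 : ∏ k, mid i j k ^ (b2 j i) k = 1/8 := by
    rw [prod_support_pair hij (fun k h1 h2 => by simp [b2, h1, h2])]
    simp [mid, b2, hij, hji]
    norm_num
  have d1 : b3 i ≠ b3 j := fun h => by have := congrFun h i; simp [b3, hij, hji] at this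
  have d2 : b3 i ≠ b2 i j := fun h => by have := congrFun h i; simp [b3, b2] at this
  have d3 : b3 i ≠ b2 j i := fun h => by have := congrFun h i; simp [b3, b2, hij] at this
  have d4 : b3 j ≠ b2 i j := fun h => by have := congrFun h i; simp [b3, b2, hij, hji] at this
  have d5 : b3 j ≠ b2 j i := fun h => by have := congrFun h i; simp [b3, b2, hij, hji] at this
  have d6 : b2 i j ≠ b2 j i := fun h => by have := congrFun h i; simp [b2, hij, hji] at this
  rw [hs, Finset.sum_insert (by simp [d1, d2, d3]),
      Finset.sum_insert (by simp [d4, d5]),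
      Finset.sum_insert (by simp [d6]),
      Finset.sum_singleton, e1, e2, e3, e4]
  ring

lemma homPoly_continuous (c : (Fin n → ℕ) → ℝ) : Continuous (homPoly n 3 c) := by
  unfold homPoly
  exact continuous_finset_sum _ fun β _ =>
    continuous_const.mul (continuous_finset_prod _ fun i _ => (continuous_apply i).pow (β i))

lemma min_le_apply (c : (Fin n → ℕ) → ℝ) {x : Fin n → ℝ} (hx : x ∈ stdSimplex ℝ (Fin n)) :
    minSimplex n (homPoly n 3 c) ≤ homPoly n 3 c x :=
  csInf_le (((isCompact_stdSimplex ℝ (Fin n)).image (homPoly_continuous c)).bddBelow)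
    ⟨x, hx, rfl⟩

lemma apply_le_max (c : (Fin n → ℕ) → ℝ) {x : Fin n → ℝ} (hx : x ∈ stdSimplex ℝ (Fin n)) :
    homPoly n 3 c x ≤ maxSimplex n (homPoly n 3 c) :=
  le_csSup (((isCompact_stdSimplex ℝ (Fin n)).image (homPoly_continuous c)).bddAbove)
    ⟨x, hx, rfl⟩

end St7

namespace St7
variable {n : ℕ}

lemma swap_sum (F : Fin n → Fin n → ℝ) :
    ∑ i, ∑ j ∈ Finset.univ.erase i, F i j = ∑ i, ∑ j ∈ Finset.univ.erase i, F j i := by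
  have h1 : ∀ (G : Fin n → Fin n → ℝ),
      ∑ i, ∑ j ∈ Finset.univ.erase i, G i j
        = ∑ i, ∑ j, if j = i then 0 else G i j := by
    intro G
    refine Finset.sum_congr rfl fun i _ => ?_
    rw [← Finset.sum_erase (f := fun j => if j = i then 0 else G i j) (a := i)
        Finset.univ (by simp)]
    exact Finset.sum_congr rfl fun j hj => (if_neg (Finset.mem_erase.1 hj).1).symm
  rw [h1, h1, Finset.sum_comm]
  exact Finset.sum_congr rfl fun j _ => Finset.sum_congr rfl fun i _ => by
    rcases eq_or_ne i j with h | h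
    · subst h; simp
    · simp [h, h.symm]

/-- Bound on the linear correction term. -/
lemma linear_bound (c : (Fin n → ℕ) → ℝ) {x : Fin n → ℝ} (hx : x ∈ stdSimplex ℝ (Fin n)) :
    minSimplex n (homPoly n 3 c) ≤ ∑ i, c (b3 i) * x i := by
  have h1 : ∀ i, minSimplex n (homPoly n 3 c) * x i ≤ c (b3 i) * x i := fun i =>
    mul_le_mul_of_nonneg_right
      (by rw [← homPoly_vert c i]; exact min_le_apply c (vert_mem i)) (hx.1 i)
  calc minSimplex n (homPoly n 3 c) = minSimplex n (homPoly n 3 c) * ∑ i, x i := by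
        rw [hx.2, mul_one]
    _ = ∑ i, minSimplex n (homPoly n 3 c) * x i := Finset.mul_sum _ _ _
    _ ≤ ∑ i, c (b3 i) * x i := Finset.sum_le_sum fun i _ => h1 i

/-- Bound on the quadratic correction term: `q(x) ≤ 4 f̄ - f̲` on the simplex. -/
lemma correction_bound (c : (Fin n → ℕ) → ℝ) {x : Fin n → ℝ}
    (hx : x ∈ stdSimplex ℝ (Fin n)) :
    ∑ i, ((∑ j ∈ Finset.univ.erase i, c (b2 i j) * (x i * x j)) + 3 * c (b3 i) * x i ^ 2)
      ≤ 4 * maxSimplex n (homPoly n 3 c) - minSimplex n (homPoly n 3 c) := by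
  set m := minSimplex n (homPoly n 3 c) with hm
  set M := maxSimplex n (homPoly n 3 c) with hM
  set a : Fin n → ℝ := fun i => c (b3 i) with ha
  have ham : ∀ i, m ≤ a i := fun i => by
    show m ≤ c (b3 i)
    rw [← homPoly_vert c i]; exact min_le_apply c (vert_mem i)
  have haM : ∀ i, a i ≤ M := fun i => by
    show c (b3 i) ≤ M
    rw [← homPoly_vert c i]; exact apply_le_max c (vert_mem i)
  have hpair : ∀ i j : Fin n, i ≠ j → c (b2 i j) + c (b2 j i) ≤ 8 * M - a i - a j := by
    intro i j hij
    have := apply_le_max c (mid_mem hij)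
    rw [homPoly_mid c hij] at this
    simp only [ha]
    linarith
  have hx0 := hx.1
  have hx1 := hx.2
  have hxe : ∀ i, ∑ j ∈ Finset.univ.erase i, x j = 1 - x i := fun i => by
    rw [Finset.sum_erase_eq_sub (Finset.mem_univ i), hx1]
  set S := ∑ i, x i ^ 2 with hS
  set P2 := ∑ i, a i * x i with hP2
  set P3 := ∑ i, a i * x i ^ 2 with hP3
  set A1 := ∑ i, ∑ j ∈ Finset.univ.erase i, c (b2 i j) * (x i * x j) with hA1
  -- symmetrize A1
  have hsym : A1 = ∑ i, ∑ j ∈ Finset.univ.erase i, c (b2 j i) * (x j * x i) :=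
    swap_sum _
  have h2A : 2 * A1 = ∑ i, ∑ j ∈ Finset.univ.erase i,
      (c (b2 i j) + c (b2 j i)) * (x i * x j) := by
    rw [two_mul]
    nth_rewrite 2 [hsym]
    rw [← Finset.sum_add_distrib]
    refine Finset.sum_congr rfl fun i _ => ?_
    rw [← Finset.sum_add_distrib]
    exact Finset.sum_congr rfl fun j _ => by ring
  have hstep2 : ∑ i, ∑ j ∈ Finset.univ.erase i, (c (b2 i j) + c (b2 j i)) * (x i * x j)
      ≤ ∑ i, ∑ j ∈ Finset.univ.erase i, (8 * M - a i - a j) * (x i * x j) := by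
    refine Finset.sum_le_sum fun i _ => Finset.sum_le_sum fun j hj => ?_
    exact mul_le_mul_of_nonneg_right (hpair i j (Ne.symm (Finset.mem_erase.1 hj).1))
      (mul_nonneg (hx0 i) (hx0 j))
  have hW : ∑ i, ∑ j ∈ Finset.univ.erase i, (a i - a j) * (x i * x j) = 0 := by
    have h := swap_sum (fun i j => (a i - a j) * (x i * x j))
    have h2 : ∑ i, ∑ j ∈ Finset.univ.erase i, (a j - a i) * (x j * x i)
        = - ∑ i, ∑ j ∈ Finset.univ.erase i, (a i - a j) * (x i * x j) := by
      rw [← Finset.sum_neg_distrib]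
      refine Finset.sum_congr rfl fun i _ => ?_
      rw [← Finset.sum_neg_distrib]
      exact Finset.sum_congr rfl fun j _ => by ring
    rw [h2] at h
    linarith
  have hstep3 : ∑ i, ∑ j ∈ Finset.univ.erase i, (8 * M - a i - a j) * (x i * x j)
      = ∑ i, ((8 * M - 2 * a i) * (x i * (1 - x i))) := by
    have hsplit : ∀ i : Fin n, ∑ j ∈ Finset.univ.erase i, (8 * M - a i - a j) * (x i * x j)
        = (8 * M - 2 * a i) * (x i * (1 - x i))
          + ∑ j ∈ Finset.univ.erase i, (a i - a j) * (x i * x j) := by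
      intro i
      have hin : ∑ j ∈ Finset.univ.erase i, ((8 * M - 2 * a i) * x i) * x j
          = ((8 * M - 2 * a i) * x i) * (1 - x i) := by
        rw [← Finset.mul_sum, hxe i]
      calc ∑ j ∈ Finset.univ.erase i, (8 * M - a i - a j) * (x i * x j)
          = ∑ j ∈ Finset.univ.erase i,
              (((8 * M - 2 * a i) * x i) * x j + (a i - a j) * (x i * x j)) :=
            Finset.sum_congr rfl fun j _ => by ring
        _ = _ := by
            rw [Finset.sum_add_distrib, hin, mul_assoc]
    rw [Finset.sum_congr rfl fun i _ => hsplit i, Finset.sum_add_distrib, hW, add_zero]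
  have hEQ : ∑ i, ((8 * M - 2 * a i) * (x i * (1 - x i)))
      = 8 * M * (∑ i, x i) - 8 * M * S - 2 * P2 + 2 * P3 := by
    calc ∑ i, ((8 * M - 2 * a i) * (x i * (1 - x i)))
        = ∑ i, (8 * M * x i - 8 * M * x i ^ 2 - 2 * (a i * x i) + 2 * (a i * x i ^ 2)) :=
          Finset.sum_congr rfl fun i _ => by ring
      _ = _ := by
          rw [Finset.sum_add_distrib, Finset.sum_sub_distrib, Finset.sum_sub_distrib,
            ← Finset.mul_sum, ← Finset.mul_sum, ← Finset.mul_sum, ← Finset.mul_sum]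
  have hP2m : m ≤ P2 := by
    rw [hP2]
    calc m = m * ∑ i, x i := by rw [hx1, mul_one]
      _ = ∑ i, m * x i := Finset.mul_sum _ _ _
      _ ≤ ∑ i, a i * x i := Finset.sum_le_sum fun i _ =>
          mul_le_mul_of_nonneg_right (ham i) (hx0 i)
  have hP3M : P3 ≤ M * S := by
    rw [hP3, hS, Finset.mul_sum]
    exact Finset.sum_le_sum fun i _ =>
      mul_le_mul_of_nonneg_right (haM i) (sq_nonneg (x i))
  have hQsplit : ∑ i, ((∑ j ∈ Finset.univ.erase i, c (b2 i j) * (x i * x j))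
      + 3 * c (b3 i) * x i ^ 2) = A1 + 3 * P3 := by
    rw [Finset.sum_add_distrib, hA1, hP3, Finset.mul_sum]
    congr 1
    exact Finset.sum_congr rfl fun i _ => by rw [ha]; ring
  rw [hQsplit]
  have hA1le : 2 * A1 ≤ 8 * M - 8 * M * S - 2 * P2 + 2 * P3 := by
    rw [h2A]
    calc _ ≤ ∑ i, ∑ j ∈ Finset.univ.erase i, (8 * M - a i - a j) * (x i * x j) := hstep2
      _ = 8 * M * (∑ i, x i) - 8 * M * S - 2 * P2 + 2 * P3 := by rw [hstep3, hEQ]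
      _ = _ := by rw [hx1]; ring
  linarith

end St7

namespace St7

/-- The key per-grid-point lower bound. -/
lemma grid_point_bound {n r : ℕ} (hr : 3 ≤ r) (c : (Fin n → ℕ) → ℝ)
    {α : Fin n → ℕ} (hα : ∑ i, α i = r) :
    minSimplex n (homPoly n 3 c)
        - 4 * (r : ℝ) / (((r : ℝ) - 1) * ((r : ℝ) - 2))
          * (maxSimplex n (homPoly n 3 c) - minSimplex n (homPoly n 3 c))
      ≤ (∑ β ∈ Finset.Nat.antidiagonalTuple n 3,
          c β * ∏ i, fall ((α i : ℕ) : ℝ) (β i)) / fall (r : ℝ) 3 := by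
  have hrR : (3 : ℝ) ≤ (r : ℝ) := by exact_mod_cast hr
  have hr0 : (0 : ℝ) < r := by linarith
  have hr1 : (0 : ℝ) < (r : ℝ) - 1 := by linarith
  have hr2 : (0 : ℝ) < (r : ℝ) - 2 := by linarith
  set m := minSimplex n (homPoly n 3 c) with hm
  set M := maxSimplex n (homPoly n 3 c) with hM
  set αR : Fin n → ℝ := fun i => ((α i : ℕ) : ℝ) with hαR
  set x : Fin n → ℝ := fun i => αR i / r with hxdef
  have hxi : ∀ i, αR i = (r : ℝ) * x i := fun i => by
    rw [hxdef]
    field_simp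
  have hx : x ∈ stdSimplex ℝ (Fin n) := by
    constructor
    · intro i
      exact div_nonneg (Nat.cast_nonneg _) (le_of_lt hr0)
    · rw [hxdef]
      have : ∑ i, αR i = (r : ℝ) := by
        rw [hαR]
        exact (by exact_mod_cast hα : ∑ i, ((α i : ℕ) : ℝ) = (r : ℝ))
      rw [← Finset.sum_div, this, div_self (ne_of_gt hr0)]
  -- the power sum is r³ f(x)
  have hPow : ∑ β ∈ Finset.Nat.antidiagonalTuple n 3, c β * ∏ i, αR i ^ β i
      = (r : ℝ) ^ 3 * homPoly n 3 c x := by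
    unfold homPoly
    rw [Finset.mul_sum]
    refine Finset.sum_congr rfl fun β hβ => ?_
    have h1 : ∏ i, αR i ^ β i = (r : ℝ) ^ 3 * ∏ i, x i ^ β i := by
      calc ∏ i, αR i ^ β i = ∏ i, ((r : ℝ) ^ β i * x i ^ β i) :=
            Finset.prod_congr rfl fun i _ => by rw [hxi i, mul_pow]
        _ = (∏ i, (r : ℝ) ^ β i) * ∏ i, x i ^ β i := Finset.prod_mul_distrib
        _ = (r : ℝ) ^ 3 * ∏ i, x i ^ β i := by
            rw [Finset.prod_pow_eq_pow_sum, (Finset.Nat.mem_antidiagonalTuple).1 hβ]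
    rw [h1]
    ring
  -- the correction term in terms of x
  have hCorr : ∑ i, ((∑ j ∈ Finset.univ.erase i, c (b2 i j) * (αR i * αR j))
        + c (b3 i) * (3 * αR i ^ 2 - 2 * αR i))
      = (r : ℝ) ^ 2 * (∑ i, ((∑ j ∈ Finset.univ.erase i, c (b2 i j) * (x i * x j))
          + 3 * c (b3 i) * x i ^ 2))
        - 2 * (r : ℝ) * ∑ i, c (b3 i) * x i := by
    rw [Finset.mul_sum, Finset.mul_sum, ← Finset.sum_sub_distrib]
    refine Finset.sum_congr rfl fun i _ => ?_
    have hinner : ∑ j ∈ Finset.univ.erase i, c (b2 i j) * (αR i * αR j)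
        = (r : ℝ) ^ 2 * ∑ j ∈ Finset.univ.erase i, c (b2 i j) * (x i * x j) := by
      rw [Finset.mul_sum]
      exact Finset.sum_congr rfl fun j _ => by rw [hxi i, hxi j]; ring
    rw [hinner, hxi i]
    ring
  -- bounds
  have hf : m ≤ homPoly n 3 c x := min_le_apply c hx
  have hQ : ∑ i, ((∑ j ∈ Finset.univ.erase i, c (b2 i j) * (x i * x j))
      + 3 * c (b3 i) * x i ^ 2) ≤ 4 * M - m := correction_bound c hx
  have hL : m ≤ ∑ i, c (b3 i) * x i := linear_bound c hx
  -- put it together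
  rw [main_identity αR c, hPow, hCorr, fall_three]
  have hnum : (r : ℝ) ^ 3 * m - (r : ℝ) ^ 2 * (4 * M - m) + 2 * (r : ℝ) * m
      ≤ (r : ℝ) ^ 3 * homPoly n 3 c x
        - ((r : ℝ) ^ 2 * (∑ i, ((∑ j ∈ Finset.univ.erase i, c (b2 i j) * (x i * x j))
            + 3 * c (b3 i) * x i ^ 2)) - 2 * (r : ℝ) * ∑ i, c (b3 i) * x i) := by
    have h1 : (r : ℝ) ^ 3 * m ≤ (r : ℝ) ^ 3 * homPoly n 3 c x :=
      mul_le_mul_of_nonneg_left hf (by positivity)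
    have h2 : (r : ℝ) ^ 2 * (∑ i, ((∑ j ∈ Finset.univ.erase i, c (b2 i j) * (x i * x j))
        + 3 * c (b3 i) * x i ^ 2)) ≤ (r : ℝ) ^ 2 * (4 * M - m) :=
      mul_le_mul_of_nonneg_left hQ (by positivity)
    have h3 : 2 * (r : ℝ) * m ≤ 2 * (r : ℝ) * ∑ i, c (b3 i) * x i :=
      mul_le_mul_of_nonneg_left hL (by positivity)
    linarith
  have hD : (0 : ℝ) < (r : ℝ) * ((r : ℝ) - 1) * ((r : ℝ) - 2) := by positivity
  have hB : m - 4 * (r : ℝ) / (((r : ℝ) - 1) * ((r : ℝ) - 2)) * (M - m)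
      = ((r : ℝ) ^ 3 * m - (r : ℝ) ^ 2 * (4 * M - m) + 2 * (r : ℝ) * m)
        / ((r : ℝ) * ((r : ℝ) - 1) * ((r : ℝ) - 2)) := by
    field_simp
    ring
  rw [hB]
  gcongr

end St7

/-- for `f` homogeneous cubic and `r ≥ 3`,
`f̲ − f_min^{(r−3)} ≤ (4r/((r−1)(r−2)))(f̄ − f̲)`. -/
theorem statement7 (n r : ℕ) (hn : 0 < n) (hr : 3 ≤ r) (c : (Fin n → ℕ) → ℝ) :
    minSimplex n (homPoly n 3 c) - polyaBound n 3 r c ≤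
      (4 * (r : ℝ) / (((r : ℝ) - 1) * ((r : ℝ) - 2))) *
        (maxSimplex n (homPoly n 3 c) - minSimplex n (homPoly n 3 c)) := by
  have hB : minSimplex n (homPoly n 3 c)
      - 4 * (r : ℝ) / (((r : ℝ) - 1) * ((r : ℝ) - 2))
        * (maxSimplex n (homPoly n 3 c) - minSimplex n (homPoly n 3 c))
      ≤ polyaBound n 3 r c := by
    apply le_csInf
    · refine ⟨_, ⟨fun k => if k = (⟨0, hn⟩ : Fin n) then r else 0, ?_, rfl⟩⟩
      show (∑ i, if i = (⟨0, hn⟩ : Fin n) then r else 0) = r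
      simp
    · rintro y ⟨α, hα, rfl⟩
      exact St7.grid_point_bound hr c hα
  linarith
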